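/- Fix M ∈ ℕ, μ ∈ Δ(S), and a sequence ε_n > 0 with ε_n → 0. If τ^{ε_n} ∈ T_{M,μ} converges weakly to τ⁰ ∈ T_{M,μ}, then limsup_{n→∞} ∫_{Δ(S)} W^{ε_n}(ν) dτ^{ε_n}(ν) ≤ ∫_{Δ(S)} W(ν) dτ⁰(ν). -/

import Mathlib

open MeasureTheory Finset

set_option maxHeartbeats 1000000
set_option linter.unusedSectionVars false
set_option linter.unusedVariables false

noncomputable section

/-- Expected utility `Σ_s u(s,a) ν(s)` of action `a` under belief `ν ∈ Δ(S)`. -/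
def expUtil {S α : Type*} [Fintype S] (u : S → α → ℝ) (ν : stdSimplex ℝ S) (a : α) : ℝ :=
  ∑ s, u s a * (ν : S → ℝ) s

/-- Admissible (optimal) actions `A*(ν) = argmax_a Σ_s u(s,a) ν(s)`. -/
def admissible {S α : Type*} [Fintype S] (u : S → α → ℝ) (ν : stdSimplex ℝ S) : Set α :=
  {a | ∀ b, expUtil u ν b ≤ expUtil u ν a}

/-- The sender's gain
`W(ν) = Σ_t η(t) · max_{a ∈ A*_t(ν)} Σ_s v(s,a) ν(s)` (ties broken in the sender's favor);
the maximum over the (finite nonempty) set of admissible action profiles is expressed as a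
supremum. -/
def senderGain {S L : Type*} [Fintype S] [Fintype L] [DecidableEq L]
    {A T : L → Type*} [∀ l, Fintype (A l)] [∀ l, Fintype (T l)]
    (u : ∀ l, T l → S → A l → ℝ) (v : S → (∀ l, A l) → ℝ) (η : ∀ l, T l → ℝ)
    (ν : stdSimplex ℝ S) : ℝ :=
  ∑ t : ∀ l, T l, (∏ l, η l (t l)) *
    sSup {x : ℝ | ∃ a : ∀ l, A l, (∀ l, a l ∈ admissible (u l (t l)) ν) ∧
      x = ∑ s, v s a * (ν : S → ℝ) s}

/-- `T_μ` : Borel probability measures on `Δ(S)` with barycenter `μ`, with the topology of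
weak convergence. -/
def barycentric {S : Type*} [Fintype S] (μ : stdSimplex ℝ S) :
    Set (ProbabilityMeasure (stdSimplex ℝ S)) :=
  {τ | ∀ s : S, (∫ ν, (ν : S → ℝ) s ∂(τ : Measure (stdSimplex ℝ S))) = (μ : S → ℝ) s}

/-- `T_{M,μ}` : elements of `T_μ` whose support has at most `M` points. -/
def barycentricM {S : Type*} [Fintype S] (M : ℕ) (μ : stdSimplex ℝ S) :
    Set (ProbabilityMeasure (stdSimplex ℝ S)) :=
  {τ | τ ∈ barycentric μ ∧ ∃ F : Finset (stdSimplex ℝ S), F.card ≤ M ∧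
    (τ : Measure (stdSimplex ℝ S)) (↑F) = 1}

/-- The regularized (Gibbs/softmax) strategy of a receiver with utility `u`, reference
("irrational") strategy `lam` and regularization parameter `ε`, under belief `ν`. -/
def regStrategy {S α : Type*} [Fintype S] [Fintype α] (u : S → α → ℝ) (lam : α → ℝ)
    (ε : ℝ) (ν : stdSimplex ℝ S) (a : α) : ℝ :=
  lam a * Real.exp (expUtil u ν a / ε) / ∑ b, lam b * Real.exp (expUtil u ν b / ε)

/-- The regularized sender gain
`W^ε(ν) = Σ_t η(t) Σ_s Σ_a v(s,a) ν(s) Π_ℓ θ^ε_{t_ℓ,ν}(a_ℓ)`. -/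
def regSenderGain {S L : Type*} [Fintype S] [Fintype L] [DecidableEq L]
    {A T : L → Type*} [∀ l, Fintype (A l)] [∀ l, Fintype (T l)]
    (u : ∀ l, T l → S → A l → ℝ) (v : S → (∀ l, A l) → ℝ) (η : ∀ l, T l → ℝ)
    (lam : ∀ l, A l → ℝ) (ε : ℝ) (ν : stdSimplex ℝ S) : ℝ :=
  ∑ t : ∀ l, T l, (∏ l, η l (t l)) *
    ∑ s, ∑ a : ∀ l, A l,
      v s a * (ν : S → ℝ) s * ∏ l, regStrategy (u l (t l)) (lam l) ε ν (a l)

section Aux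

variable {S : Type*} [Fintype S] [Nonempty S]

instance : CompactSpace (stdSimplex ℝ S) :=
  isCompact_iff_compactSpace.mp (isCompact_stdSimplex ℝ S)

lemma coord_le_one (ν : stdSimplex ℝ S) (s : S) : (ν : S → ℝ) s ≤ 1 := by
  calc (ν : S → ℝ) s ≤ ∑ s', (ν : S → ℝ) s' :=
        Finset.single_le_sum (fun i _ => ν.2.1 i) (Finset.mem_univ s)
    _ = 1 := ν.2.2

lemma continuous_coord (s : S) : Continuous fun ν : stdSimplex ℝ S => (ν : S → ℝ) s :=
  (continuous_apply s).comp continuous_subtype_val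

lemma continuous_expUtil {α : Type*} (u : S → α → ℝ) (a : α) :
    Continuous fun ν : stdSimplex ℝ S => expUtil u ν a :=
  continuous_finset_sum _ fun s _ => continuous_const.mul (continuous_coord s)

section OnePlayer

variable {α : Type*} [Fintype α] [Nonempty α] (u : S → α → ℝ) {lam : α → ℝ}

lemma regDenom_pos (hlam : ∀ a, 0 < lam a) (e : ℝ) (ν : stdSimplex ℝ S) :
    0 < ∑ b, lam b * Real.exp (expUtil u ν b / e) :=
  Finset.sum_pos (fun b _ => mul_pos (hlam b) (Real.exp_pos _)) Finset.univ_nonempty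

lemma regStrategy_nonneg (hlam : ∀ a, 0 < lam a) (e : ℝ) (ν : stdSimplex ℝ S) (a : α) :
    0 ≤ regStrategy u lam e ν a :=
  div_nonneg (mul_pos (hlam a) (Real.exp_pos _)).le (regDenom_pos u hlam e ν).le

lemma regStrategy_sum_eq_one (hlam : ∀ a, 0 < lam a) (e : ℝ) (ν : stdSimplex ℝ S) :
    ∑ a, regStrategy u lam e ν a = 1 := by
  unfold regStrategy
  rw [← Finset.sum_div]
  exact div_self (regDenom_pos u hlam e ν).ne'

lemma regStrategy_le_one (hlam : ∀ a, 0 < lam a) (e : ℝ) (ν : stdSimplex ℝ S) (a : α) :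
    regStrategy u lam e ν a ≤ 1 := by
  unfold regStrategy
  rw [div_le_one (regDenom_pos u hlam e ν)]
  exact Finset.single_le_sum (f := fun b => lam b * Real.exp (expUtil u ν b / e))
    (fun b _ => (mul_pos (hlam b) (Real.exp_pos _)).le) (Finset.mem_univ a)

lemma continuous_regStrategy (hlam : ∀ a, 0 < lam a) (e : ℝ) (a : α) :
    Continuous fun ν : stdSimplex ℝ S => regStrategy u lam e ν a := by
  unfold regStrategy
  exact Continuous.div
    (continuous_const.mul (Real.continuous_exp.comp ((continuous_expUtil u a).div_const e)))
    (continuous_finset_sum _ fun b _ =>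
      continuous_const.mul (Real.continuous_exp.comp ((continuous_expUtil u b).div_const e)))
    fun ν => (regDenom_pos u hlam e ν).ne'

lemma regStrategy_tendsto_zero (hlam : ∀ a, 0 < lam a) (x : stdSimplex ℝ S) {b : α}
    (hb : b ∉ admissible u x) :
    Filter.Tendsto (fun p : ℝ × stdSimplex ℝ S => regStrategy u lam p.1 p.2 b)
      ((nhdsWithin 0 (Set.Ioi 0)) ×ˢ nhds x) (nhds 0) := by
  obtain ⟨c, -, hc⟩ := Finset.exists_max_image Finset.univ (expUtil u x) Finset.univ_nonempty
  have hgap : 0 < expUtil u x c - expUtil u x b := by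
    simp only [admissible, Set.mem_setOf_eq, not_forall, not_le] at hb
    obtain ⟨b', hb'⟩ := hb
    have := hc b' (Finset.mem_univ _)
    linarith
  have hboundfun : ∀ p : ℝ × stdSimplex ℝ S, regStrategy u lam p.1 p.2 b ≤
      lam b / lam c * Real.exp ((expUtil u p.2 b - expUtil u p.2 c) / p.1) := by
    intro p
    have h1 : lam c * Real.exp (expUtil u p.2 c / p.1) ≤
        ∑ b', lam b' * Real.exp (expUtil u p.2 b' / p.1) :=
      Finset.single_le_sum (f := fun b' => lam b' * Real.exp (expUtil u p.2 b' / p.1))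
        (fun b' _ => (mul_pos (hlam b') (Real.exp_pos _)).le) (Finset.mem_univ c)
    have h2 := div_le_div_of_nonneg_left
      (mul_pos (hlam b) (Real.exp_pos (expUtil u p.2 b / p.1))).le
      (mul_pos (hlam c) (Real.exp_pos _)) h1
    calc regStrategy u lam p.1 p.2 b ≤
        lam b * Real.exp (expUtil u p.2 b / p.1) /
          (lam c * Real.exp (expUtil u p.2 c / p.1)) := h2
      _ = lam b / lam c * Real.exp ((expUtil u p.2 b - expUtil u p.2 c) / p.1) := by
          rw [sub_div, Real.exp_sub, mul_div_mul_comm]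
  have h3 : Filter.Tendsto (fun p : ℝ × stdSimplex ℝ S =>
      (expUtil u p.2 c - expUtil u p.2 b) * (p.1)⁻¹)
      ((nhdsWithin 0 (Set.Ioi 0)) ×ˢ nhds x) Filter.atTop :=
    Filter.Tendsto.pos_mul_atTop hgap
      ((((continuous_expUtil u c).sub (continuous_expUtil u b)).tendsto x).comp
        Filter.tendsto_snd)
      (tendsto_inv_nhdsGT_zero.comp Filter.tendsto_fst)
  have hexp : Filter.Tendsto
      (fun p : ℝ × stdSimplex ℝ S => (expUtil u p.2 b - expUtil u p.2 c) / p.1)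
      ((nhdsWithin 0 (Set.Ioi 0)) ×ˢ nhds x) Filter.atBot := by
    have heq : (fun p : ℝ × stdSimplex ℝ S => (expUtil u p.2 b - expUtil u p.2 c) / p.1)
        = fun p => -((expUtil u p.2 c - expUtil u p.2 b) * (p.1)⁻¹) := by
      funext p; rw [div_eq_mul_inv]; ring
    rw [heq]
    exact Filter.tendsto_neg_atBot_iff.mpr h3
  have hb0 : Filter.Tendsto (fun p : ℝ × stdSimplex ℝ S =>
      lam b / lam c * Real.exp ((expUtil u p.2 b - expUtil u p.2 c) / p.1))
      ((nhdsWithin 0 (Set.Ioi 0)) ×ˢ nhds x) (nhds 0) := by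
    have := (Real.tendsto_exp_atBot.comp hexp).const_mul (lam b / lam c)
    simpa using this
  exact squeeze_zero' (Filter.Eventually.of_forall fun p => regStrategy_nonneg u hlam _ _ _)
    (Filter.Eventually.of_forall hboundfun) hb0

end OnePlayer


section Multi

variable {L : Type*} [Fintype L] [DecidableEq L] {A : L → Type*} [∀ l, Fintype (A l)]
  [∀ l, Nonempty (A l)] (v : S → (∀ l, A l) → ℝ) {lam : ∀ l, A l → ℝ}

/-- A uniform bound on the sender's payoffs. -/
def Cb : ℝ := (∑ s, ∑ a : ∀ l, A l, |v s a|) + 1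

lemma Cb_pos : 0 < Cb v := by
  have h : (0:ℝ) ≤ ∑ s, ∑ a : ∀ l, A l, |v s a| :=
    Finset.sum_nonneg fun s _ => Finset.sum_nonneg fun a _ => abs_nonneg _
  unfold Cb; linarith

lemma abs_G_le (a : ∀ l, A l) (ν : stdSimplex ℝ S) :
    |∑ s, v s a * (ν : S → ℝ) s| ≤ Cb v := by
  have h1 : |∑ s, v s a * (ν : S → ℝ) s| ≤ ∑ s, |v s a * (ν : S → ℝ) s| :=
    Finset.abs_sum_le_sum_abs _ _
  have h2 : ∑ s, |v s a * (ν : S → ℝ) s| ≤ ∑ s, |v s a| := by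
    refine Finset.sum_le_sum fun s _ => ?_
    rw [abs_mul, abs_of_nonneg (show 0 ≤ (ν : S → ℝ) s from ν.2.1 s)]
    exact mul_le_of_le_one_right (abs_nonneg _) (coord_le_one ν s)
  have h3 : ∑ s, |v s a| ≤ ∑ s, ∑ a' : ∀ l, A l, |v s a'| :=
    Finset.sum_le_sum fun s _ =>
      Finset.single_le_sum (f := fun a' : ∀ l, A l => |v s a'|)
        (fun a' _ => abs_nonneg _) (Finset.mem_univ a)
  unfold Cb; linarith

lemma inner_rearrange (w : ∀ l, S → A l → ℝ) (e : ℝ) (ν : stdSimplex ℝ S) :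
    ∑ s, ∑ a : ∀ l, A l, v s a * (ν : S → ℝ) s * ∏ l, regStrategy (w l) (lam l) e ν (a l)
      = ∑ a : ∀ l, A l,
          (∏ l, regStrategy (w l) (lam l) e ν (a l)) * ∑ s, v s a * (ν : S → ℝ) s := by
  rw [Finset.sum_comm]
  exact Finset.sum_congr rfl fun a _ => by
    rw [Finset.mul_sum]
    exact Finset.sum_congr rfl fun s _ => by ring

lemma prodθ_nonneg (hlam : ∀ l a, 0 < lam l a) (w : ∀ l, S → A l → ℝ) (e : ℝ)
    (ν : stdSimplex ℝ S) (a : ∀ l, A l) :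
    0 ≤ ∏ l, regStrategy (w l) (lam l) e ν (a l) :=
  Finset.prod_nonneg fun l _ => regStrategy_nonneg _ (hlam l) _ _ _

lemma sum_prodθ (hlam : ∀ l a, 0 < lam l a) (w : ∀ l, S → A l → ℝ) (e : ℝ)
    (ν : stdSimplex ℝ S) :
    ∑ a : ∀ l, A l, ∏ l, regStrategy (w l) (lam l) e ν (a l) = 1 := by
  have h := Finset.prod_univ_sum (fun l => (Finset.univ : Finset (A l)))
    (fun l b => regStrategy (w l) (lam l) e ν b)
  rw [Fintype.piFinset_univ] at h
  rw [← h]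
  exact Finset.prod_eq_one fun l _ => regStrategy_sum_eq_one (w l) (hlam l) e ν

lemma prodθ_le (hlam : ∀ l a, 0 < lam l a) (w : ∀ l, S → A l → ℝ) (e : ℝ)
    (ν : stdSimplex ℝ S) (a : ∀ l, A l) (l0 : L) :
    ∏ l, regStrategy (w l) (lam l) e ν (a l) ≤ regStrategy (w l0) (lam l0) e ν (a l0) := by
  rw [← Finset.mul_prod_erase Finset.univ _ (Finset.mem_univ l0)]
  calc regStrategy (w l0) (lam l0) e ν (a l0) *
        ∏ l ∈ Finset.univ.erase l0, regStrategy (w l) (lam l) e ν (a l)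
      ≤ regStrategy (w l0) (lam l0) e ν (a l0) * 1 := by
        refine mul_le_mul_of_nonneg_left ?_ (regStrategy_nonneg _ (hlam l0) _ _ _)
        exact Finset.prod_le_one (fun l _ => regStrategy_nonneg _ (hlam l) _ _ _)
          (fun l _ => regStrategy_le_one _ (hlam l) _ _ _)
    _ = regStrategy (w l0) (lam l0) e ν (a l0) := mul_one _

lemma vals_props (w : ∀ l, S → A l → ℝ) (x : stdSimplex ℝ S) :
    (-Cb v ≤ sSup {r : ℝ | ∃ a : ∀ l, A l, (∀ l, a l ∈ admissible (w l) x) ∧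
        r = ∑ s, v s a * (x : S → ℝ) s}) ∧
    (sSup {r : ℝ | ∃ a : ∀ l, A l, (∀ l, a l ∈ admissible (w l) x) ∧
        r = ∑ s, v s a * (x : S → ℝ) s} ≤ Cb v) ∧
    (∀ a : ∀ l, A l, (∀ l, a l ∈ admissible (w l) x) →
      (∑ s, v s a * (x : S → ℝ) s) ≤ sSup {r : ℝ | ∃ a : ∀ l, A l,
        (∀ l, a l ∈ admissible (w l) x) ∧ r = ∑ s, v s a * (x : S → ℝ) s}) := by
  classical
  set Vals := {r : ℝ | ∃ a : ∀ l, A l, (∀ l, a l ∈ admissible (w l) x) ∧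
    r = ∑ s, v s a * (x : S → ℝ) s} with hV
  have hadm : ∀ l, ∃ c : A l, c ∈ admissible (w l) x := by
    intro l
    obtain ⟨c, -, hc⟩ := Finset.exists_max_image Finset.univ (expUtil (w l) x)
      Finset.univ_nonempty
    exact ⟨c, fun b => hc b (Finset.mem_univ b)⟩
  choose a0 ha0 using hadm
  have hmem0 : (∑ s, v s a0 * (x : S → ℝ) s) ∈ Vals := ⟨a0, ha0, rfl⟩
  have hfin : Vals.Finite := by
    refine Set.Finite.subset
      (Set.finite_range fun a : ∀ l, A l => ∑ s, v s a * (x : S → ℝ) s) ?_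
    rintro r ⟨a, -, rfl⟩; exact ⟨a, rfl⟩
  have hbdd : BddAbove Vals := hfin.bddAbove
  have hkey : ∀ a : ∀ l, A l, (∀ l, a l ∈ admissible (w l) x) →
      (∑ s, v s a * (x : S → ℝ) s) ≤ sSup Vals := fun a ha => le_csSup hbdd ⟨a, ha, rfl⟩
  refine ⟨le_trans (abs_le.mp (abs_G_le v a0 x)).1 (hkey a0 ha0), ?_, hkey⟩
  refine csSup_le ⟨_, hmem0⟩ ?_
  rintro r ⟨a, -, rfl⟩
  exact (abs_le.mp (abs_G_le v a x)).2

lemma per_type (hlam : ∀ l a, 0 < lam l a) (w : ∀ l, S → A l → ℝ) (x : stdSimplex ℝ S)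
    {δ : ℝ} (hδ : 0 < δ) :
    ∀ᶠ p : ℝ × stdSimplex ℝ S in (nhdsWithin 0 (Set.Ioi 0)) ×ˢ nhds x,
      (∑ s, ∑ a : ∀ l, A l, v s a * (p.2 : S → ℝ) s *
          ∏ l, regStrategy (w l) (lam l) p.1 p.2 (a l)) ≤
        sSup {r : ℝ | ∃ a : ∀ l, A l, (∀ l, a l ∈ admissible (w l) x) ∧
          r = ∑ s, v s a * (x : S → ℝ) s} + δ := by
  classical
  obtain ⟨hsup_ge, -, hkey⟩ := vals_props v w x
  set C := Cb v with hC
  have hCpos : 0 < C := Cb_pos v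
  set N : ℕ := Fintype.card (∀ l, A l) with hN
  have hden : 0 < 1 + 2 * C * (N:ℝ) := by positivity
  set ρ := δ / (1 + 2 * C * (N:ℝ)) with hρdef
  have hρ : 0 < ρ := div_pos hδ hden
  set SV := sSup {r : ℝ | ∃ a : ∀ l, A l, (∀ l, a l ∈ admissible (w l) x) ∧
    r = ∑ s, v s a * (x : S → ℝ) s} with hSV
  have E1 : ∀ᶠ p : ℝ × stdSimplex ℝ S in (nhdsWithin 0 (Set.Ioi 0)) ×ˢ nhds x,
      ∀ a : ∀ l, A l, (∑ s, v s a * (p.2 : S → ℝ) s) ≤ (∑ s, v s a * (x : S → ℝ) s) + ρ := by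
    rw [Filter.eventually_all]
    intro a
    have hcont : Filter.Tendsto (fun p : ℝ × stdSimplex ℝ S => ∑ s, v s a * (p.2 : S → ℝ) s)
        ((nhdsWithin 0 (Set.Ioi 0)) ×ˢ nhds x) (nhds (∑ s, v s a * (x : S → ℝ) s)) :=
      (((continuous_finset_sum _ fun s _ => continuous_const.mul (continuous_coord s)).tendsto
        x).comp Filter.tendsto_snd)
    exact hcont.eventually (eventually_le_nhds (lt_add_of_pos_right _ hρ))
  have E2 : ∀ᶠ p : ℝ × stdSimplex ℝ S in (nhdsWithin 0 (Set.Ioi 0)) ×ˢ nhds x,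
      ∀ l, ∀ b : A l, b ∉ admissible (w l) x → regStrategy (w l) (lam l) p.1 p.2 b ≤ ρ := by
    rw [Filter.eventually_all]
    intro l
    rw [Filter.eventually_all]
    intro b
    by_cases hb : b ∈ admissible (w l) x
    · exact Filter.Eventually.of_forall fun p hb' => absurd hb hb'
    · have h := (regStrategy_tendsto_zero (w l) (hlam l) x hb).eventually
        (eventually_le_nhds hρ)
      exact h.mono fun p hp _ => hp
  filter_upwards [E1, E2] with p h1 h2
  rw [inner_rearrange]
  set P : (∀ l, A l) → ℝ := fun a => ∏ l, regStrategy (w l) (lam l) p.1 p.2 (a l) with hP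
  have hP0 : ∀ a, 0 ≤ P a := fun a => prodθ_nonneg hlam w p.1 p.2 a
  have hPsum : ∑ a : ∀ l, A l, P a = 1 := sum_prodθ hlam w p.1 p.2
  have step : ∀ a : ∀ l, A l, P a * (∑ s, v s a * (p.2 : S → ℝ) s) ≤ P a * (SV + ρ) +
      (if (∀ l, a l ∈ admissible (w l) x) then 0 else ρ * (2*C)) := by
    intro a
    by_cases ha : ∀ l, a l ∈ admissible (w l) x
    · rw [if_pos ha, add_zero]
      refine mul_le_mul_of_nonneg_left ?_ (hP0 a)
      have := hkey a ha
      have := h1 a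
      linarith
    · rw [if_neg ha]
      push_neg at ha
      obtain ⟨l0, hl0⟩ := ha
      have hPa : P a ≤ ρ := le_trans (prodθ_le hlam w p.1 p.2 a l0) (h2 l0 (a l0) hl0)
      have hG : (∑ s, v s a * (p.2 : S → ℝ) s) ≤ SV + ρ + 2*C := by
        have hab := (abs_le.mp (abs_G_le v a p.2)).2
        linarith
      calc P a * (∑ s, v s a * (p.2 : S → ℝ) s) ≤ P a * (SV + ρ + 2*C) :=
            mul_le_mul_of_nonneg_left hG (hP0 a)
        _ = P a * (SV + ρ) + P a * (2*C) := by ring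
        _ ≤ P a * (SV + ρ) + ρ * (2*C) := by
            have h5 : P a * (2*C) ≤ ρ * (2*C) :=
              mul_le_mul_of_nonneg_right hPa (by positivity)
            linarith
  calc ∑ a : ∀ l, A l, P a * (∑ s, v s a * (p.2 : S → ℝ) s)
      ≤ ∑ a : ∀ l, A l, (P a * (SV + ρ) +
          (if (∀ l, a l ∈ admissible (w l) x) then 0 else ρ * (2*C))) :=
        Finset.sum_le_sum fun a _ => step a
    _ ≤ ∑ a : ∀ l, A l, (P a * (SV + ρ) + ρ * (2*C)) := by
        refine Finset.sum_le_sum fun a _ => add_le_add_right ?_ _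
        split
        · positivity
        · exact le_refl _
    _ = (SV + ρ) + (N:ℝ) * (ρ * (2*C)) := by
        rw [Finset.sum_add_distrib, ← Finset.sum_mul, hPsum, one_mul, Finset.sum_const,
          Finset.card_univ, nsmul_eq_mul]
    _ ≤ SV + δ := by
        have hq : ρ * (1 + 2*C*(N:ℝ)) = δ := div_mul_cancel₀ δ hden.ne'
        nlinarith [hq]


section Types

variable {T : L → Type*} [∀ l, Fintype (T l)] [∀ l, Nonempty (T l)]
  (u : ∀ l, T l → S → A l → ℝ) (η : ∀ l, T l → ℝ)

lemma eta_nonneg (hη : ∀ l, η l ∈ stdSimplex ℝ (T l)) (t : ∀ l, T l) :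
    0 ≤ ∏ l, η l (t l) :=
  Finset.prod_nonneg fun l _ => (hη l).1 (t l)

lemma eta_sum (hη : ∀ l, η l ∈ stdSimplex ℝ (T l)) :
    ∑ t : ∀ l, T l, ∏ l, η l (t l) = 1 := by
  have h := Finset.prod_univ_sum (fun l => (Finset.univ : Finset (T l))) (fun l tl => η l tl)
  rw [Fintype.piFinset_univ] at h
  rw [← h]
  exact Finset.prod_eq_one fun l _ => (hη l).2

lemma abs_inner_le (hlam : ∀ l a, 0 < lam l a) (w : ∀ l, S → A l → ℝ) (e : ℝ)
    (ν : stdSimplex ℝ S) :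
    |∑ s, ∑ a : ∀ l, A l, v s a * (ν : S → ℝ) s *
      ∏ l, regStrategy (w l) (lam l) e ν (a l)| ≤ Cb v := by
  rw [inner_rearrange]
  calc |∑ a : ∀ l, A l, (∏ l, regStrategy (w l) (lam l) e ν (a l)) *
          ∑ s, v s a * (ν : S → ℝ) s|
      ≤ ∑ a : ∀ l, A l, |(∏ l, regStrategy (w l) (lam l) e ν (a l)) *
          ∑ s, v s a * (ν : S → ℝ) s| := Finset.abs_sum_le_sum_abs _ _
    _ ≤ ∑ a : ∀ l, A l, (∏ l, regStrategy (w l) (lam l) e ν (a l)) * Cb v := by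
        refine Finset.sum_le_sum fun a _ => ?_
        rw [abs_mul, abs_of_nonneg (prodθ_nonneg hlam w e ν a)]
        exact mul_le_mul_of_nonneg_left (abs_G_le v a ν) (prodθ_nonneg hlam w e ν a)
    _ = Cb v := by rw [← Finset.sum_mul, sum_prodθ hlam w e ν, one_mul]

lemma abs_regSenderGain_le (hlam : ∀ l a, 0 < lam l a) (hη : ∀ l, η l ∈ stdSimplex ℝ (T l))
    (e : ℝ) (ν : stdSimplex ℝ S) :
    |regSenderGain u v η lam e ν| ≤ Cb v := by
  unfold regSenderGain
  calc |∑ t : ∀ l, T l, (∏ l, η l (t l)) * ∑ s, ∑ a : ∀ l, A l,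
          v s a * (ν : S → ℝ) s * ∏ l, regStrategy (u l (t l)) (lam l) e ν (a l)|
      ≤ ∑ t : ∀ l, T l, |(∏ l, η l (t l)) * ∑ s, ∑ a : ∀ l, A l,
          v s a * (ν : S → ℝ) s * ∏ l, regStrategy (u l (t l)) (lam l) e ν (a l)| :=
        Finset.abs_sum_le_sum_abs _ _
    _ ≤ ∑ t : ∀ l, T l, (∏ l, η l (t l)) * Cb v := by
        refine Finset.sum_le_sum fun t _ => ?_
        rw [abs_mul, abs_of_nonneg (eta_nonneg η hη t)]
        exact mul_le_mul_of_nonneg_left (abs_inner_le v hlam (fun l => u l (t l)) e ν)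
          (eta_nonneg η hη t)
    _ = Cb v := by rw [← Finset.sum_mul, eta_sum η hη, one_mul]

lemma abs_senderGain_le (hη : ∀ l, η l ∈ stdSimplex ℝ (T l)) (x : stdSimplex ℝ S) :
    |senderGain u v η x| ≤ Cb v := by
  unfold senderGain
  calc |∑ t : ∀ l, T l, (∏ l, η l (t l)) * sSup {r : ℝ | ∃ a : ∀ l, A l,
          (∀ l, a l ∈ admissible (u l (t l)) x) ∧ r = ∑ s, v s a * (x : S → ℝ) s}|
      ≤ ∑ t : ∀ l, T l, |(∏ l, η l (t l)) * sSup {r : ℝ | ∃ a : ∀ l, A l,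
          (∀ l, a l ∈ admissible (u l (t l)) x) ∧ r = ∑ s, v s a * (x : S → ℝ) s}| :=
        Finset.abs_sum_le_sum_abs _ _
    _ ≤ ∑ t : ∀ l, T l, (∏ l, η l (t l)) * Cb v := by
        refine Finset.sum_le_sum fun t _ => ?_
        rw [abs_mul, abs_of_nonneg (eta_nonneg η hη t)]
        refine mul_le_mul_of_nonneg_left ?_ (eta_nonneg η hη t)
        obtain ⟨hg, hl, -⟩ := vals_props v (fun l => u l (t l)) x
        rw [abs_le]; exact ⟨hg, hl⟩
    _ = Cb v := by rw [← Finset.sum_mul, eta_sum η hη, one_mul]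

lemma continuous_regSenderGain (hlam : ∀ l a, 0 < lam l a) (e : ℝ) :
    Continuous fun ν : stdSimplex ℝ S => regSenderGain u v η lam e ν := by
  unfold regSenderGain
  refine continuous_finset_sum _ fun t _ => Continuous.mul continuous_const ?_
  refine continuous_finset_sum _ fun s _ => continuous_finset_sum _ fun a _ => ?_
  exact ((continuous_const.mul (continuous_coord s)).mul
    (continuous_finset_prod _ fun l _ => continuous_regStrategy _ (hlam l) e _))

lemma reg_le_sender_eventually (hlam : ∀ l a, 0 < lam l a)
    (hη : ∀ l, η l ∈ stdSimplex ℝ (T l)) (x : stdSimplex ℝ S) {δ : ℝ} (hδ : 0 < δ) :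
    ∀ᶠ p : ℝ × stdSimplex ℝ S in (nhdsWithin 0 (Set.Ioi 0)) ×ˢ nhds x,
      regSenderGain u v η lam p.1 p.2 ≤ senderGain u v η x + δ := by
  have H : ∀ᶠ p : ℝ × stdSimplex ℝ S in (nhdsWithin 0 (Set.Ioi 0)) ×ˢ nhds x,
      ∀ t : ∀ l, T l,
        (∑ s, ∑ a : ∀ l, A l, v s a * (p.2 : S → ℝ) s *
            ∏ l, regStrategy (u l (t l)) (lam l) p.1 p.2 (a l)) ≤
          sSup {r : ℝ | ∃ a : ∀ l, A l, (∀ l, a l ∈ admissible (u l (t l)) x) ∧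
            r = ∑ s, v s a * (x : S → ℝ) s} + δ := by
    rw [Filter.eventually_all]
    intro t
    exact per_type v hlam (fun l => u l (t l)) x hδ
  filter_upwards [H] with p hp
  unfold regSenderGain senderGain
  calc ∑ t : ∀ l, T l, (∏ l, η l (t l)) * ∑ s, ∑ a : ∀ l, A l,
          v s a * (p.2 : S → ℝ) s * ∏ l, regStrategy (u l (t l)) (lam l) p.1 p.2 (a l)
      ≤ ∑ t : ∀ l, T l, (∏ l, η l (t l)) *
          (sSup {r : ℝ | ∃ a : ∀ l, A l, (∀ l, a l ∈ admissible (u l (t l)) x) ∧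
            r = ∑ s, v s a * (x : S → ℝ) s} + δ) :=
        Finset.sum_le_sum fun t _ => mul_le_mul_of_nonneg_left (hp t) (eta_nonneg η hη t)
    _ = (∑ t : ∀ l, T l, (∏ l, η l (t l)) *
          sSup {r : ℝ | ∃ a : ∀ l, A l, (∀ l, a l ∈ admissible (u l (t l)) x) ∧
            r = ∑ s, v s a * (x : S → ℝ) s}) + (∑ t : ∀ l, T l, ∏ l, η l (t l)) * δ := by
        rw [Finset.sum_mul, ← Finset.sum_add_distrib]
        exact Finset.sum_congr rfl fun t _ => by ring
    _ = _ + δ := by rw [eta_sum η hη, one_mul]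

lemma exists_ball (hlam : ∀ l a, 0 < lam l a) (hη : ∀ l, η l ∈ stdSimplex ℝ (T l))
    (x : stdSimplex ℝ S) {δ : ℝ} (hδ : 0 < δ) :
    ∃ r, 0 < r ∧ ∃ eb, 0 < eb ∧ ∀ e, 0 < e → e < eb → ∀ ν : stdSimplex ℝ S, dist ν x < r →
      regSenderGain u v η lam e ν ≤ senderGain u v η x + δ := by
  have h := reg_le_sender_eventually v u η hlam hη x hδ
  rw [Filter.eventually_prod_iff] at h
  obtain ⟨pa, hpa, pb, hpb, himp⟩ := h
  have hpa' : {e : ℝ | pa e} ∈ nhdsWithin (0:ℝ) (Set.Ioi 0) := hpa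
  rw [mem_nhdsGT_iff_exists_Ioo_subset] at hpa'
  obtain ⟨eb, heb, hsub⟩ := hpa'
  rw [Metric.eventually_nhds_iff] at hpb
  obtain ⟨r, hr, hball⟩ := hpb
  exact ⟨r, hr, eb, heb, fun e he1 he2 ν hν => himp (hsub ⟨he1, he2⟩) (hball hν)⟩

end Types

end Multi


lemma integral_eq_sum_of_support {X : Type*} [MeasurableSpace X] [MeasurableSingletonClass X]
    (μ : Measure X) [IsFiniteMeasure μ] (F : Finset X) (hF : μ (↑F : Set X)ᶜ = 0)
    (f : X → ℝ) :
    ∫ x, f x ∂μ = ∑ y ∈ F, (μ {y}).toReal * f y := by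
  classical
  have hae : f =ᵐ[μ] fun x => ∑ y ∈ F, Set.indicator {y} (fun _ => f y) x := by
    rw [Filter.EventuallyEq, ae_iff]
    refine measure_mono_null ?_ hF
    intro x hx
    simp only [Set.mem_setOf_eq] at hx
    simp only [Set.mem_compl_iff, Finset.mem_coe]
    intro hxF
    apply hx
    rw [Finset.sum_eq_single x]
    · simp
    · intro y _ hy
      exact Set.indicator_of_notMem (by simp [Ne.symm hy]) _
    · intro hxF'; exact absurd hxF hxF'
  rw [integral_congr_ae hae,
    integral_finset_sum _ (fun y _ => (integrable_const (f y)).indicator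
      (measurableSet_singleton y))]
  refine Finset.sum_congr rfl fun y _ => ?_
  rw [integral_indicator_const _ (measurableSet_singleton y), smul_eq_mul, measureReal_def]

lemma sum_singleton_toReal {X : Type*} [MeasurableSpace X] [MeasurableSingletonClass X]
    (μ : Measure X) [IsProbabilityMeasure μ] (F : Finset X) (hF : μ (↑F : Set X) = 1) :
    ∑ y ∈ F, (μ {y}).toReal = 1 := by
  classical
  have hb : μ (⋃ y ∈ F, ({y} : Set X)) = ∑ y ∈ F, μ {y} :=
    measure_biUnion_finset (fun y _ z _ hyz => by
        simp [Function.onFun, Set.disjoint_singleton, hyz])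
      (fun y _ => measurableSet_singleton y)
  have hU : (⋃ y ∈ F, ({y} : Set X)) = (↑F : Set X) := by ext z; simp
  rw [hU, hF] at hb
  rw [← ENNReal.toReal_sum (fun y _ => measure_ne_top μ _), ← hb, ENNReal.toReal_one]

end Aux


/-- If `ε_n → 0⁺` and `τ^{ε_n} ∈ T_{M,μ}` converges weakly to
`τ⁰ ∈ T_{M,μ}`, then `limsup_n ∫ W^{ε_n} dτ^{ε_n} ≤ ∫ W dτ⁰`. -/
theorem limsup_reg_value_le {S : Type*} [Fintype S] [Nonempty S]
    {L : Type*} [Fintype L] [DecidableEq L]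
    {A : L → Type*} [∀ l, Fintype (A l)] [∀ l, Nonempty (A l)]
    {T : L → Type*} [∀ l, Fintype (T l)] [∀ l, Nonempty (T l)]
    (u : ∀ l, T l → S → A l → ℝ) (v : S → (∀ l, A l) → ℝ)
    (η : ∀ l, T l → ℝ) (hη : ∀ l, η l ∈ stdSimplex ℝ (T l))
    (lam : ∀ l, A l → ℝ) (hlam : ∀ l, lam l ∈ stdSimplex ℝ (A l))
    (hlampos : ∀ l a, 0 < lam l a)
    (M : ℕ) (μ : stdSimplex ℝ S)
    (ε : ℕ → ℝ) (hε : ∀ n, 0 < ε n) (hε0 : Filter.Tendsto ε Filter.atTop (nhds 0))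
    (τseq : ℕ → ProbabilityMeasure (stdSimplex ℝ S))
    (hτseq : ∀ n, τseq n ∈ barycentricM M μ)
    (τ0 : ProbabilityMeasure (stdSimplex ℝ S)) (hτ0 : τ0 ∈ barycentricM M μ)
    (hconv : Filter.Tendsto τseq Filter.atTop (nhds τ0)) :
    Filter.limsup
        (fun n => ∫ ν, regSenderGain u v η lam (ε n) ν
          ∂(τseq n : Measure (stdSimplex ℝ S)))
        Filter.atTop ≤
      ∫ ν, senderGain u v η ν ∂(τ0 : Measure (stdSimplex ℝ S)) := by
  classical
  obtain ⟨-, F, -, hF1⟩ := hτ0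
  have hFmeas : MeasurableSet (↑F : Set (stdSimplex ℝ S)) := F.measurableSet
  have hFc : (τ0 : Measure (stdSimplex ℝ S)) (↑F : Set (stdSimplex ℝ S))ᶜ = 0 := by
    have h := measure_compl (μ := (τ0 : Measure (stdSimplex ℝ S))) hFmeas (measure_ne_top _ _)
    rw [hF1, measure_univ] at h
    simpa using h
  have hFne : F.Nonempty := by
    rcases F.eq_empty_or_nonempty with h | h
    · exfalso
      rw [h] at hF1
      simp at hF1
    · exact h
  refine le_of_forall_pos_le_add fun δ hδ => ?_
  set C := Cb v with hCdef
  have hCpos : 0 < C := Cb_pos v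
  have H : ∀ y : stdSimplex ℝ S, ∃ r, 0 < r ∧ ∃ eb, 0 < eb ∧ ∀ e, 0 < e → e < eb →
      ∀ ν : stdSimplex ℝ S, dist ν y < r →
        regSenderGain u v η lam e ν ≤ senderGain u v η y + δ :=
    fun y => exists_ball v u η hlampos hη y hδ
  choose r hr eb heb hloc using H
  set g : stdSimplex ℝ S → ℝ := fun ν => F.inf' hFne fun y =>
    min (C + δ) (senderGain u v η y + δ + (2*C / r y) * dist ν y) with hgdef
  have hgcont : Continuous g :=
    Continuous.finset_inf'_apply hFne fun y _ =>
      continuous_const.min (continuous_const.add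
        (continuous_const.mul (continuous_id.dist continuous_const)))
  set gB := BoundedContinuousFunction.mkOfCompact ⟨g, hgcont⟩ with hgBdef
  set ebmin := F.inf' hFne eb with hebmindef
  have hebmin : 0 < ebmin := (Finset.lt_inf'_iff hFne).mpr fun y _ => heb y
  have hev : ∀ᶠ n in Filter.atTop, ∀ ν : stdSimplex ℝ S,
      regSenderGain u v η lam (ε n) ν ≤ g ν := by
    filter_upwards [hε0.eventually (eventually_lt_nhds hebmin)] with n hn ν
    refine Finset.le_inf' hFne _ fun y hy => ?_
    have hεy : ε n < eb y := lt_of_lt_of_le hn (Finset.inf'_le eb hy)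
    have hb1 : regSenderGain u v η lam (ε n) ν ≤ C :=
      (abs_le.mp (abs_regSenderGain_le v u η hlampos hη (ε n) ν)).2
    rw [le_min_iff]
    constructor
    · linarith
    · by_cases hd : dist ν y < r y
      · have h1 := hloc y (ε n) (hε n) hεy ν hd
        have h2 : 0 ≤ (2*C / r y) * dist ν y :=
          mul_nonneg (div_nonneg (by linarith) (hr y).le) dist_nonneg
        linarith
      · push_neg at hd
        have h2 : (2*C / r y) * r y ≤ (2*C / r y) * dist ν y :=
          mul_le_mul_of_nonneg_left hd (div_nonneg (by linarith) (hr y).le)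
        rw [div_mul_cancel₀ _ (hr y).ne'] at h2
        have h3 : -C ≤ senderGain u v η y :=
          (abs_le.mp (abs_senderGain_le v u η hη y)).1
        linarith
  have hInt : ∀ n, Integrable (fun ν => regSenderGain u v η lam (ε n) ν)
      ((τseq n : Measure (stdSimplex ℝ S))) := fun n =>
    (BoundedContinuousFunction.mkOfCompact
      ⟨_, continuous_regSenderGain v u η hlampos (ε n)⟩).integrable _
  have hab : ∀ᶠ n in Filter.atTop,
      (∫ ν, regSenderGain u v η lam (ε n) ν ∂(τseq n : Measure (stdSimplex ℝ S))) ≤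
        ∫ ν, g ν ∂(τseq n : Measure (stdSimplex ℝ S)) := by
    filter_upwards [hev] with n hn
    exact integral_mono (hInt n) (gB.integrable _) hn
  have hbconv : Filter.Tendsto (fun n => ∫ ν, g ν ∂(τseq n : Measure (stdSimplex ℝ S)))
      Filter.atTop (nhds (∫ ν, g ν ∂(τ0 : Measure (stdSimplex ℝ S)))) := by
    have h := (ProbabilityMeasure.tendsto_iff_forall_integral_tendsto.mp hconv) gB
    exact h
  have hgle : (∫ ν, g ν ∂(τ0 : Measure (stdSimplex ℝ S))) ≤
      (∫ ν, senderGain u v η ν ∂(τ0 : Measure (stdSimplex ℝ S))) + δ := by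
    rw [integral_eq_sum_of_support _ F hFc g,
      integral_eq_sum_of_support _ F hFc (senderGain u v η)]
    have hsum1 : ∑ y ∈ F, ((τ0 : Measure (stdSimplex ℝ S)) {y}).toReal = 1 :=
      sum_singleton_toReal _ F hF1
    calc ∑ y ∈ F, ((τ0 : Measure (stdSimplex ℝ S)) {y}).toReal * g y
        ≤ ∑ y ∈ F, ((τ0 : Measure (stdSimplex ℝ S)) {y}).toReal *
            (senderGain u v η y + δ) := by
          refine Finset.sum_le_sum fun y hy => ?_
          refine mul_le_mul_of_nonneg_left ?_ ENNReal.toReal_nonneg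
          calc g y ≤ min (C + δ) (senderGain u v η y + δ + (2*C / r y) * dist y y) :=
                Finset.inf'_le _ hy
            _ ≤ senderGain u v η y + δ := by
                rw [dist_self, mul_zero, add_zero]
                exact min_le_right _ _
      _ = (∑ y ∈ F, ((τ0 : Measure (stdSimplex ℝ S)) {y}).toReal * senderGain u v η y)
            + δ := by
          simp_rw [mul_add]
          rw [Finset.sum_add_distrib, ← Finset.sum_mul, hsum1, one_mul]
  have hlow : ∀ n, -C ≤ ∫ ν, regSenderGain u v η lam (ε n) ν
      ∂(τseq n : Measure (stdSimplex ℝ S)) := by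
    intro n
    have h := norm_integral_le_of_norm_le_const
      (μ := (τseq n : Measure (stdSimplex ℝ S)))
      (f := fun ν => regSenderGain u v η lam (ε n) ν) (C := C)
      (Filter.Eventually.of_forall fun ν => by
        rw [Real.norm_eq_abs]
        exact abs_regSenderGain_le v u η hlampos hη (ε n) ν)
    rw [probReal_univ, mul_one, Real.norm_eq_abs] at h
    exact (abs_le.mp h).1
  have hcb : Filter.IsCoboundedUnder (· ≤ ·) Filter.atTop
      (fun n => ∫ ν, regSenderGain u v η lam (ε n) ν
        ∂(τseq n : Measure (stdSimplex ℝ S))) := by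
    have hbb : Filter.IsBoundedUnder (· ≥ ·) Filter.atTop
        (fun n => ∫ ν, regSenderGain u v η lam (ε n) ν
          ∂(τseq n : Measure (stdSimplex ℝ S))) :=
      Filter.isBoundedUnder_of ⟨-C, fun n => hlow n⟩
    exact hbb.isCoboundedUnder_le
  calc Filter.limsup (fun n => ∫ ν, regSenderGain u v η lam (ε n) ν
          ∂(τseq n : Measure (stdSimplex ℝ S))) Filter.atTop
      ≤ Filter.limsup (fun n => ∫ ν, g ν ∂(τseq n : Measure (stdSimplex ℝ S)))
          Filter.atTop :=
        Filter.limsup_le_limsup hab hcb hbconv.isBoundedUnder_le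
    _ = ∫ ν, g ν ∂(τ0 : Measure (stdSimplex ℝ S)) := hbconv.limsup_eq
    _ ≤ _ + δ := hgle

end
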